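/- (Kramers' degeneracy theorem.) Let E be a complex inner product space, let Θ : E → E be a time reversal operator (a conjugate-linear antiunitary map with Θ² = −1), and let H : E → E be a ℂ-linear symmetric operator (⟪Hφ, ψ⟫ = ⟪φ, Hψ⟫ for all φ, ψ) that commutes with Θ, i.e., Θ ∘ H = H ∘ Θ. If φ ≠ 0 is an eigenvector of H with eigenvalue μ ∈ ℂ, then μ is real, Θφ is a nonzero eigenvector of H with the same eigenvalue μ, and ⟪φ, Θφ⟫ = 0; in particular φ and Θφ are linearly independent, so every eigenspace of H has dimension at least 2. -/

import Mathlib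

open scoped ComplexInnerProductSpace

/-- Kramers' degeneracy theorem: if `H` is a `ℂ`-linear symmetric
operator commuting with a time reversal operator `Θ` (conjugate-linear, antiunitary,
`Θ² = -1`), and `φ ≠ 0` is an eigenvector of `H` with eigenvalue `μ`, then `μ` is real,
`Θφ` is a nonzero eigenvector of `H` with eigenvalue `μ`, `⟪φ, Θφ⟫ = 0`, the pair
`(φ, Θφ)` is linearly independent, and the eigenspace of `H` for `μ` has dimension
at least `2`. -/
theorem kramers_degeneracy {E : Type*} [NormedAddCommGroup E] [InnerProductSpace ℂ E]
    (Θ : E → E)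
    (hconj : ∀ (a : ℂ) (φ ψ : E), Θ (a • φ + ψ) = (starRingEnd ℂ a) • Θ φ + Θ ψ)
    (hanti : ∀ φ ψ : E, ⟪Θ ψ, Θ φ⟫ = ⟪φ, ψ⟫)
    (hsq : ∀ φ : E, Θ (Θ φ) = -φ)
    (H : E →ₗ[ℂ] E)
    (hsymm : ∀ φ ψ : E, ⟪H φ, ψ⟫ = ⟪φ, H ψ⟫)
    (hcomm : ∀ φ : E, Θ (H φ) = H (Θ φ))
    (φ : E) (hφ : φ ≠ 0) (μ : ℂ) (heig : H φ = μ • φ) :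
    μ.im = 0 ∧ Θ φ ≠ 0 ∧ H (Θ φ) = μ • Θ φ ∧ ⟪φ, Θ φ⟫ = 0 ∧
      LinearIndependent ℂ ![φ, Θ φ] ∧
      2 ≤ Module.rank ℂ (Module.End.eigenspace H μ) := by
  -- μ is real
  have hnorm : ⟪φ, φ⟫ ≠ 0 := fun h => hφ (inner_self_eq_zero.mp h)
  have hμreal : (starRingEnd ℂ) μ = μ := by
    have h1 : ⟪H φ, φ⟫ = ⟪φ, H φ⟫ := hsymm φ φ
    rw [heig, inner_smul_left, inner_smul_right] at h1
    exact mul_right_cancel₀ hnorm h1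
  have him : μ.im = 0 := by
    have := congrArg Complex.im hμreal
    simp [Complex.conj_im] at this
    linarith
  -- Θ φ ≠ 0
  have hΘnorm : ⟪Θ φ, Θ φ⟫ = ⟪φ, φ⟫ := hanti φ φ
  have hΘφ : Θ φ ≠ 0 := by
    intro h
    apply hnorm
    rw [← hΘnorm, h, inner_zero_left]
  -- eigenvalue equation for Θ φ
  have hsmul : ∀ (a : ℂ) (ψ : E), Θ (a • ψ) = (starRingEnd ℂ a) • Θ ψ := by
    intro a ψ
    have h0 : Θ 0 = 0 := by
      have h := hconj 1 0 0
      simp only [one_smul, add_zero, map_one, one_smul] at h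
      exact (left_eq_add.mp h)
    have := hconj a ψ 0
    simpa [h0] using this
  have heig2 : H (Θ φ) = μ • Θ φ := by
    rw [← hcomm, heig, hsmul, hμreal]
  -- orthogonality
  have horth : ⟪φ, Θ φ⟫ = 0 := by
    have h := hanti φ (Θ φ)
    rw [hsq, inner_neg_left] at h
    have : (2 : ℂ) * ⟪φ, Θ φ⟫ = 0 := by ring_nf; linear_combination -h
    simpa using this
  -- linear independence
  have hli : LinearIndependent ℂ ![φ, Θ φ] := by
    rw [LinearIndependent.pair_iff]
    intro s t hst
    have h1 : ⟪φ, s • φ + t • Θ φ⟫ = 0 := by rw [hst, inner_zero_right]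
    rw [inner_add_right, inner_smul_right, inner_smul_right, horth, mul_zero, add_zero] at h1
    have hs : s = 0 := by
      rcases mul_eq_zero.mp h1 with h | h
      · exact h
      · exact absurd h hnorm
    have h2 : ⟪Θ φ, s • φ + t • Θ φ⟫ = 0 := by rw [hst, inner_zero_right]
    have horth' : ⟪Θ φ, φ⟫ = 0 := by
      rw [← inner_conj_symm, horth, map_zero]
    rw [inner_add_right, inner_smul_right, inner_smul_right, horth', mul_zero, zero_add,
      hΘnorm] at h2
    have ht : t = 0 := by
      rcases mul_eq_zero.mp h2 with h | h
      · exact h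
      · exact absurd h hnorm
    exact ⟨hs, ht⟩
  refine ⟨him, hΘφ, heig2, horth, hli, ?_⟩
  -- rank of eigenspace
  have hmem1 : φ ∈ Module.End.eigenspace H μ := by
    rw [Module.End.mem_eigenspace_iff]; exact heig
  have hmem2 : Θ φ ∈ Module.End.eigenspace H μ := by
    rw [Module.End.mem_eigenspace_iff]; exact heig2
  set f : Fin 2 → Module.End.eigenspace H μ :=
    ![⟨φ, hmem1⟩, ⟨Θ φ, hmem2⟩] with hf
  have hlif : LinearIndependent ℂ f := by
    apply LinearIndependent.of_comp (Module.End.eigenspace H μ).subtype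
    have : (Module.End.eigenspace H μ).subtype ∘ f = ![φ, Θ φ] := by
      funext i
      fin_cases i <;> rfl
    rw [this]
    exact hli
  have := hlif.cardinal_lift_le_rank
  simpa using this
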